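/- The nonzero pairs in (ℝ×ℝ)², considered up to the action of GL₂(ℝ×ℝ) combined with ∼-equivalence, form exactly three orbits: (1) the orbit of (1,0), which is precisely the set of admissible pairs; (2) the orbit of (P₊,0), which is precisely the set {(λ₁P₊, λ₂P₊) : λ₁,λ₂ ∈ ℝ not both 0}; (3) the orbit of (P₋,0), which is precisely the set {(λ₁P₋, λ₂P₋) : λ₁,λ₂ ∈ ℝ not both 0}. These three sets are pairwise disjoint and their union is (ℝ×ℝ)²∖{(0,0)}. -/

import Mathlib

/-- The double numbers `ℝ ⊕ ℝ`, realized as `ℝ × ℝ` with componentwise operations,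
with `P₊ = (1, 0)` and `P₋ = (0, 1)`. -/
abbrev DoubleNumber := ℝ × ℝ

/-- A pair `(a, b)` over a commutative ring `R` is *admissible* if there exist `c, d ∈ R`
such that `a*d - b*c` is a unit of `R`. -/
def Admissible {R : Type*} [CommRing R] (v : R × R) : Prop :=
  ∃ c d : R, IsUnit (v.1 * d - v.2 * c)

/-- Two pairs are equivalent if one is a unit multiple of the other. -/
def PairEquiv {R : Type*} [CommRing R] (v w : R × R) : Prop :=
  ∃ u : Rˣ, v.1 = (u : R) * w.1 ∧ v.2 = (u : R) * w.2

/-- The action of a `2 × 2` matrix on a pair viewed as a column vector. -/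
def MulAct {R : Type*} [CommRing R] (M : Matrix (Fin 2) (Fin 2) R) (v : R × R) : R × R :=
  (M 0 0 * v.1 + M 0 1 * v.2, M 1 0 * v.1 + M 1 1 * v.2)

/-- The orbit of `w` under the action of `GL₂(R)` combined with `∼`-equivalence:
`v` lies in the orbit of `w` iff there is `M ∈ GL₂(R)` with `M·w ∼ v`. -/
def Orbit {R : Type*} [CommRing R] (w : R × R) : Set (R × R) :=
  {v | ∃ M : Matrix (Fin 2) (Fin 2) R, IsUnit M.det ∧ PairEquiv (MulAct M w) v}

theorem isUnit_pair_iff (x : ℝ × ℝ) : IsUnit x ↔ x.1 ≠ 0 ∧ x.2 ≠ 0 := by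
  constructor
  · rintro ⟨u, rfl⟩
    have h : (u : ℝ × ℝ) * ((u⁻¹ : (ℝ × ℝ)ˣ) : ℝ × ℝ) = 1 := u.mul_inv
    rw [Prod.ext_iff] at h
    simp only [Prod.fst_mul, Prod.snd_mul, Prod.fst_one, Prod.snd_one] at h
    constructor
    · intro h0; rw [h0, zero_mul] at h; exact zero_ne_one h.1
    · intro h0; rw [h0, zero_mul] at h; exact zero_ne_one h.2
  · rintro ⟨h1, h2⟩
    exact IsUnit.of_mul_eq_one (a := x) (x.1⁻¹, x.2⁻¹)
      (by rw [Prod.ext_iff]; simp [Prod.fst_mul, Prod.snd_mul, h1, h2])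

theorem orbit_one_iff (v : DoubleNumber × DoubleNumber) :
    v ∈ Orbit ((1 : DoubleNumber), (0 : DoubleNumber)) ↔
      (v.1.1 ≠ 0 ∨ v.2.1 ≠ 0) ∧ (v.1.2 ≠ 0 ∨ v.2.2 ≠ 0) := by
  constructor
  · rintro ⟨M, hdet, u, h1, h2⟩
    simp only [MulAct, mul_one, mul_zero, add_zero] at h1 h2
    rw [Matrix.det_fin_two, isUnit_pair_iff] at hdet
    simp only [Prod.fst_sub, Prod.snd_sub, Prod.fst_mul, Prod.snd_mul] at hdet
    have hu := (isUnit_pair_iff _).mp u.isUnit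
    have g1 := congrArg Prod.fst h1
    have g2 := congrArg Prod.fst h2
    have g3 := congrArg Prod.snd h1
    have g4 := congrArg Prod.snd h2
    simp only [Prod.fst_mul, Prod.snd_mul] at g1 g2 g3 g4
    constructor
    · by_contra hc
      push_neg at hc
      rw [hc.1, mul_zero] at g1
      rw [hc.2, mul_zero] at g2
      exact hdet.1 (by rw [g1, g2]; ring)
    · by_contra hc
      push_neg at hc
      rw [hc.1, mul_zero] at g3
      rw [hc.2, mul_zero] at g4
      exact hdet.2 (by rw [g3, g4]; ring)
  · rintro ⟨h1, h2⟩
    refine ⟨!![v.1, -v.2; v.2, v.1], ?_, 1, ?_, ?_⟩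
    · rw [Matrix.det_fin_two_of, isUnit_pair_iff]
      constructor
      · simp only [Prod.fst_sub, Prod.fst_mul, Prod.fst_neg]
        rcases h1 with h | h <;> intro h0 <;>
          nlinarith [mul_self_nonneg v.1.1, mul_self_nonneg v.2.1, mul_self_pos.mpr h]
      · simp only [Prod.snd_sub, Prod.snd_mul, Prod.snd_neg]
        rcases h2 with h | h <;> intro h0 <;>
          nlinarith [mul_self_nonneg v.1.2, mul_self_nonneg v.2.2, mul_self_pos.mpr h]
    · simp [MulAct]
    · simp [MulAct]

theorem orbit_plus_iff (v : DoubleNumber × DoubleNumber) :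
    v ∈ Orbit ((((1 : ℝ), (0 : ℝ)) : DoubleNumber), (0 : DoubleNumber)) ↔
      (v.1.1 ≠ 0 ∨ v.2.1 ≠ 0) ∧ v.1.2 = 0 ∧ v.2.2 = 0 := by
  constructor
  · rintro ⟨M, hdet, u, h1, h2⟩
    simp only [MulAct, mul_zero, add_zero] at h1 h2
    rw [Matrix.det_fin_two, isUnit_pair_iff] at hdet
    simp only [Prod.fst_sub, Prod.snd_sub, Prod.fst_mul, Prod.snd_mul] at hdet
    have hu := (isUnit_pair_iff _).mp u.isUnit
    have g1 := congrArg Prod.fst h1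
    have g2 := congrArg Prod.fst h2
    have g3 := congrArg Prod.snd h1
    have g4 := congrArg Prod.snd h2
    simp only [Prod.fst_mul, Prod.snd_mul, mul_one, mul_zero] at g1 g2 g3 g4
    refine ⟨?_, ?_, ?_⟩
    · by_contra hc
      push_neg at hc
      rw [hc.1, mul_zero] at g1
      rw [hc.2, mul_zero] at g2
      exact hdet.1 (by rw [g1, g2]; ring)
    · rcases mul_eq_zero.mp g3.symm with h | h
      · exact absurd h hu.2
      · exact h
    · rcases mul_eq_zero.mp g4.symm with h | h
      · exact absurd h hu.2
      · exact h
  · rintro ⟨h1, h2, h3⟩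
    refine ⟨!![((v.1.1, 1) : DoubleNumber), ((-v.2.1, 0) : DoubleNumber);
               ((v.2.1, 0) : DoubleNumber), ((v.1.1, 1) : DoubleNumber)], ?_, 1, ?_, ?_⟩
    · rw [Matrix.det_fin_two_of, isUnit_pair_iff]
      constructor
      · simp only [Prod.fst_sub, Prod.fst_mul, Matrix.cons_val', Matrix.cons_val_zero,
          Matrix.cons_val_one, Matrix.head_cons, Matrix.head_fin_const, Matrix.empty_val']
        rcases h1 with h | h <;> intro h0 <;>
          nlinarith [mul_self_nonneg v.1.1, mul_self_nonneg v.2.1, mul_self_pos.mpr h]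
      · norm_num [Prod.snd_sub, Prod.snd_mul]
    · simp only [MulAct, mul_zero, add_zero, one_mul, Units.val_one]
      rw [Prod.ext_iff]
      simp [h2]
    · simp only [MulAct, mul_zero, add_zero, one_mul, Units.val_one]
      rw [Prod.ext_iff]
      simp [h3]

theorem orbit_minus_iff (v : DoubleNumber × DoubleNumber) :
    v ∈ Orbit ((((0 : ℝ), (1 : ℝ)) : DoubleNumber), (0 : DoubleNumber)) ↔
      (v.1.2 ≠ 0 ∨ v.2.2 ≠ 0) ∧ v.1.1 = 0 ∧ v.2.1 = 0 := by
  constructor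
  · rintro ⟨M, hdet, u, h1, h2⟩
    simp only [MulAct, mul_zero, add_zero] at h1 h2
    rw [Matrix.det_fin_two, isUnit_pair_iff] at hdet
    simp only [Prod.fst_sub, Prod.snd_sub, Prod.fst_mul, Prod.snd_mul] at hdet
    have hu := (isUnit_pair_iff _).mp u.isUnit
    have g1 := congrArg Prod.fst h1
    have g2 := congrArg Prod.fst h2
    have g3 := congrArg Prod.snd h1
    have g4 := congrArg Prod.snd h2
    simp only [Prod.fst_mul, Prod.snd_mul, mul_one, mul_zero] at g1 g2 g3 g4
    refine ⟨?_, ?_, ?_⟩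
    · by_contra hc
      push_neg at hc
      rw [hc.1, mul_zero] at g3
      rw [hc.2, mul_zero] at g4
      exact hdet.2 (by rw [g3, g4]; ring)
    · rcases mul_eq_zero.mp g1.symm with h | h
      · exact absurd h hu.1
      · exact h
    · rcases mul_eq_zero.mp g2.symm with h | h
      · exact absurd h hu.1
      · exact h
  · rintro ⟨h1, h2, h3⟩
    refine ⟨!![((1, v.1.2) : DoubleNumber), ((0, -v.2.2) : DoubleNumber);
               ((0, v.2.2) : DoubleNumber), ((1, v.1.2) : DoubleNumber)], ?_, 1, ?_, ?_⟩
    · rw [Matrix.det_fin_two_of, isUnit_pair_iff]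
      constructor
      · norm_num [Prod.fst_sub, Prod.fst_mul]
      · simp only [Prod.snd_sub, Prod.snd_mul, Matrix.cons_val', Matrix.cons_val_zero,
          Matrix.cons_val_one, Matrix.head_cons, Matrix.head_fin_const, Matrix.empty_val']
        rcases h1 with h | h <;> intro h0 <;>
          nlinarith [mul_self_nonneg v.1.2, mul_self_nonneg v.2.2, mul_self_pos.mpr h]
    · simp only [MulAct, mul_zero, add_zero, one_mul, Units.val_one]
      rw [Prod.ext_iff]
      simp [h2]
    · simp only [MulAct, mul_zero, add_zero, one_mul, Units.val_one]
      rw [Prod.ext_iff]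
      simp [h3]

theorem adm_iff (v : DoubleNumber × DoubleNumber) :
    Admissible v ↔ (v.1.1 ≠ 0 ∨ v.2.1 ≠ 0) ∧ (v.1.2 ≠ 0 ∨ v.2.2 ≠ 0) := by
  constructor
  · rintro ⟨c, d, h⟩
    rw [isUnit_pair_iff] at h
    simp only [Prod.fst_sub, Prod.snd_sub, Prod.fst_mul, Prod.snd_mul] at h
    constructor
    · by_contra hc
      push_neg at hc
      exact h.1 (by rw [hc.1, hc.2]; ring)
    · by_contra hc
      push_neg at hc
      exact h.2 (by rw [hc.1, hc.2]; ring)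
  · rintro ⟨h1, h2⟩
    refine ⟨-v.2, v.1, ?_⟩
    rw [isUnit_pair_iff]
    constructor
    · simp only [Prod.fst_sub, Prod.fst_mul, Prod.fst_neg]
      rcases h1 with h | h <;> intro h0 <;>
        nlinarith [mul_self_nonneg v.1.1, mul_self_nonneg v.2.1, mul_self_pos.mpr h]
    · simp only [Prod.snd_sub, Prod.snd_mul, Prod.snd_neg]
      rcases h2 with h | h <;> intro h0 <;>
        nlinarith [mul_self_nonneg v.1.2, mul_self_nonneg v.2.2, mul_self_pos.mpr h]

/-- The nonzero pairs in `(ℝ×ℝ)²`, up to the action of `GL₂(ℝ×ℝ)`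
combined with `∼`-equivalence, form exactly three orbits: the orbit of `(1,0)`, which is
the set of admissible pairs; the orbit of `(P₊,0)`, which is
`{(λ₁P₊, λ₂P₊) : λ₁, λ₂ not both 0}`; and the orbit of `(P₋,0)`, which is
`{(λ₁P₋, λ₂P₋) : λ₁, λ₂ not both 0}`.  These three sets are pairwise disjoint and their
union is `(ℝ×ℝ)² ∖ {(0,0)}`. -/
theorem double_orbit_decomposition :
    Orbit ((1 : DoubleNumber), (0 : DoubleNumber)) = {v | Admissible v} ∧
    Orbit ((((1 : ℝ), (0 : ℝ)) : DoubleNumber), (0 : DoubleNumber)) =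
      {v | ∃ l₁ l₂ : ℝ, (l₁, l₂) ≠ ((0 : ℝ), (0 : ℝ)) ∧
        v = (((l₁, 0) : DoubleNumber), ((l₂, 0) : DoubleNumber))} ∧
    Orbit ((((0 : ℝ), (1 : ℝ)) : DoubleNumber), (0 : DoubleNumber)) =
      {v | ∃ l₁ l₂ : ℝ, (l₁, l₂) ≠ ((0 : ℝ), (0 : ℝ)) ∧
        v = (((0, l₁) : DoubleNumber), ((0, l₂) : DoubleNumber))} ∧
    Disjoint (Orbit ((1 : DoubleNumber), (0 : DoubleNumber)))
      (Orbit ((((1 : ℝ), (0 : ℝ)) : DoubleNumber), (0 : DoubleNumber))) ∧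
    Disjoint (Orbit ((1 : DoubleNumber), (0 : DoubleNumber)))
      (Orbit ((((0 : ℝ), (1 : ℝ)) : DoubleNumber), (0 : DoubleNumber))) ∧
    Disjoint (Orbit ((((1 : ℝ), (0 : ℝ)) : DoubleNumber), (0 : DoubleNumber)))
      (Orbit ((((0 : ℝ), (1 : ℝ)) : DoubleNumber), (0 : DoubleNumber))) ∧
    Orbit ((1 : DoubleNumber), (0 : DoubleNumber)) ∪
      Orbit ((((1 : ℝ), (0 : ℝ)) : DoubleNumber), (0 : DoubleNumber)) ∪
      Orbit ((((0 : ℝ), (1 : ℝ)) : DoubleNumber), (0 : DoubleNumber)) =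
      {v : DoubleNumber × DoubleNumber | v ≠ 0} := by
  refine ⟨?_, ?_, ?_, ?_, ?_, ?_, ?_⟩
  · ext v
    rw [orbit_one_iff]
    exact ((adm_iff v).symm)
  · ext v
    rw [orbit_plus_iff]
    constructor
    · rintro ⟨h1, h2, h3⟩
      refine ⟨v.1.1, v.2.1, ?_, ?_⟩
      · simp only [ne_eq, Prod.mk.injEq, not_and]
        intro ha hb
        rcases h1 with h | h <;> [exact h ha; exact h hb]
      · rw [Prod.ext_iff, Prod.ext_iff, Prod.ext_iff]
        exact ⟨⟨rfl, h2⟩, ⟨rfl, h3⟩⟩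
    · rintro ⟨l₁, l₂, hne, rfl⟩
      refine ⟨?_, rfl, rfl⟩
      by_contra hc
      push_neg at hc
      exact hne (Prod.ext hc.1 hc.2)
  · ext v
    rw [orbit_minus_iff]
    constructor
    · rintro ⟨h1, h2, h3⟩
      refine ⟨v.1.2, v.2.2, ?_, ?_⟩
      · simp only [ne_eq, Prod.mk.injEq, not_and]
        intro ha hb
        rcases h1 with h | h <;> [exact h ha; exact h hb]
      · rw [Prod.ext_iff, Prod.ext_iff, Prod.ext_iff]
        exact ⟨⟨h2, rfl⟩, ⟨h3, rfl⟩⟩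
    · rintro ⟨l₁, l₂, hne, rfl⟩
      refine ⟨?_, rfl, rfl⟩
      by_contra hc
      push_neg at hc
      exact hne (Prod.ext hc.1 hc.2)
  · rw [Set.disjoint_left]
    intro v hv hv2
    rw [orbit_one_iff] at hv
    rw [orbit_plus_iff] at hv2
    tauto
  · rw [Set.disjoint_left]
    intro v hv hv2
    rw [orbit_one_iff] at hv
    rw [orbit_minus_iff] at hv2
    tauto
  · rw [Set.disjoint_left]
    intro v hv hv2
    rw [orbit_plus_iff] at hv
    rw [orbit_minus_iff] at hv2
    tauto
  · ext v
    simp only [Set.mem_union, Set.mem_setOf_eq]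
    rw [orbit_one_iff, orbit_plus_iff, orbit_minus_iff]
    have h0 : v = 0 ↔ v.1.1 = 0 ∧ v.1.2 = 0 ∧ v.2.1 = 0 ∧ v.2.2 = 0 := by
      rw [Prod.ext_iff, Prod.ext_iff, Prod.ext_iff]
      simp only [Prod.fst_zero, Prod.snd_zero]
      tauto
    simp only [ne_eq, h0]
    tauto
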